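/- Adjusted conditional mean recovers the marginal potential-outcome mean: with the adjusted outcome Ycf ω := Yobs ω − Σ_{l ∈ J, l ≠ A ω} p(l)·c(A ω, l), one has E[Ycf | A = j] = E[Y j] for every treatment j ∈ J. -/

import Mathlib

open MeasureTheory ProbabilityTheory

noncomputable section

variable {Ω J : Type*}

/-- `condMean μ A Z j` is `E[Z | A = j]`, the mean of `Z` under the conditional
measure `μ[|{A = j}]`. -/
def condMean [MeasurableSpace Ω] (μ : Measure Ω) (A : Ω → J) (Z : Ω → ℝ) (j : J) : ℝ :=
  ∫ ω, Z ω ∂(μ[|{ω | A ω = j}])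

/-- `treatProb μ A j` is `p(j) = μ{ω : A ω = j}`. -/
def treatProb [MeasurableSpace Ω] (μ : Measure Ω) (A : Ω → J) (j : J) : ℝ :=
  (μ {ω | A ω = j}).toReal

/-- The confounding function `c(j,k) = E[Y j | A = j] - E[Y j | A = k]`. -/
def confFun [MeasurableSpace Ω] (μ : Measure Ω) (A : Ω → J) (Y : J → Ω → ℝ) (j k : J) : ℝ :=
  condMean μ A (Y j) j - condMean μ A (Y j) k

/-- The confounding-function-adjusted outcome
`Ycf ω = Yobs ω - ∑_{l ≠ A ω} p(l) · c(A ω, l)`. -/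
def adjOutcome [MeasurableSpace Ω] [Fintype J] [DecidableEq J]
    (μ : Measure Ω) (A : Ω → J) (Y : J → Ω → ℝ) (ω : Ω) : ℝ :=
  Y (A ω) ω -
    ∑ l ∈ Finset.univ.filter (fun l => l ≠ A ω), treatProb μ A l * confFun μ A Y (A ω) l

private lemma condMean_eq' [MeasurableSpace Ω] (μ : Measure Ω) (A : Ω → J) (Z : Ω → ℝ) (j : J) :
    condMean μ A Z j = (treatProb μ A j)⁻¹ * ∫ ω in {ω | A ω = j}, Z ω ∂μ := by
  rw [condMean, ProbabilityTheory.cond, integral_smul_measure, treatProb]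
  simp [ENNReal.toReal_inv]

theorem adjusted_condMean_eq_marginal_mean
    [MeasurableSpace Ω] (μ : Measure Ω) [IsProbabilityMeasure μ]
    [Fintype J] [Nonempty J] [DecidableEq J] [MeasurableSpace J] [MeasurableSingletonClass J]
    (A : Ω → J) (hA : Measurable A)
    (Y : J → Ω → ℝ) (hY : ∀ j, Integrable (Y j) μ)
    (hp : ∀ j, 0 < treatProb μ A j)
    (j : J) :
    condMean μ A (adjOutcome μ A Y) j = ∫ ω, Y j ω ∂μ := by
  classical
  set s : J → Set Ω := fun l => {ω | A ω = l} with hs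
  have hms : ∀ l, MeasurableSet (s l) := fun l => hA (measurableSet_singleton l)
  set E : J → ℝ := fun l => condMean μ A (Y j) l with hE
  set p : J → ℝ := fun l => treatProb μ A l with hpdef
  have hpne : ∀ l, p l ≠ 0 := fun l => (hp l).ne'
  -- set integral of Y j over s l
  have hset : ∀ l, ∫ ω in s l, Y j ω ∂μ = p l * E l := by
    intro l
    have h := condMean_eq' μ A (Y j) l
    show ∫ ω in {ω | A ω = l}, Y j ω ∂μ = treatProb μ A l * condMean μ A (Y j) l
    rw [h, ← mul_assoc, mul_inv_cancel₀ (hpne l), one_mul]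
  -- total expectation
  have hpart : (Set.univ : Set Ω) = ⋃ l ∈ (Finset.univ : Finset J), s l := by
    ext ω; simp [hs]
  have hdisj : (↑(Finset.univ : Finset J) : Set J).PairwiseDisjoint s := by
    intro a _ b _ hab
    simp only [Function.onFun, Set.disjoint_left]
    intro ω h1 h2
    exact hab (h1.symm.trans h2)
  have htotal : ∫ ω, Y j ω ∂μ = ∑ l, p l * E l := by
    have h1 : ∫ ω, Y j ω ∂μ = ∫ ω in Set.univ, Y j ω ∂μ := by simp
    rw [h1, hpart, integral_biUnion_finset _ (fun l _ => hms l) hdisj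
      (fun l _ => (hY j).integrableOn)]
    exact Finset.sum_congr rfl fun l _ => hset l
  -- p sums to 1
  have hsum1 : ∑ l, p l = 1 := by
    have : ∑ l, μ (s l) = 1 := by
      rw [← measure_biUnion_finset hdisj (fun l _ => hms l), ← hpart, measure_univ]
    have h2 : ∑ l, p l = (∑ l, μ (s l)).toReal := by
      rw [ENNReal.toReal_sum (fun l _ => measure_ne_top μ _)]
      rfl
    rw [h2, this, ENNReal.toReal_one]
  -- the constant subtracted on s j
  set C : ℝ := ∑ l ∈ Finset.univ.filter (fun l => l ≠ j), p l * confFun μ A Y j l with hC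
  -- compute LHS
  have hLHS : condMean μ A (adjOutcome μ A Y) j = E j - C := by
    rw [condMean_eq']
    have hcongr : ∫ ω in s j, adjOutcome μ A Y ω ∂μ = ∫ ω in s j, (Y j ω - C) ∂μ := by
      refine setIntegral_congr_fun (hms j) ?_
      intro ω hω
      have hω' : A ω = j := hω
      simp only [adjOutcome, hω', hC, hpdef]
    rw [hcongr, integral_sub ((hY j).restrict) (integrable_const C),
      setIntegral_const, hset j, smul_eq_mul]
    have hmeas : μ.real (s j) = p j := rfl
    have hmeas2 : treatProb μ A j = p j := rfl
    rw [hmeas, hmeas2, ← mul_sub, ← mul_assoc, inv_mul_cancel₀ (hpne j), one_mul]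
  rw [hLHS, htotal]
  -- algebra
  have hconf : ∀ l, confFun μ A Y j l = E j - E l := fun l => rfl
  have hfilter : Finset.univ.filter (fun l => l ≠ j) = Finset.univ.erase j := by
    ext l; simp [Finset.mem_erase, and_comm]
  have hCval : C = (∑ l ∈ Finset.univ.erase j, p l) * E j - ∑ l ∈ Finset.univ.erase j, p l * E l := by
    rw [hC, hfilter]
    simp only [hconf, mul_sub, Finset.sum_sub_distrib, Finset.sum_mul]
  have hpj : p j = 1 - ∑ l ∈ Finset.univ.erase j, p l := by
    have := Finset.add_sum_erase Finset.univ p (Finset.mem_univ j)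
    rw [hsum1] at this
    linarith
  rw [← Finset.add_sum_erase Finset.univ (fun l => p l * E l) (Finset.mem_univ j), hCval, hpj]
  ring


end
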